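/- Let Λ be the Lobachevsky function. Then 6·(Λ(5π/12) + Λ(π/12)) = 8·Λ(π/4). -/

import Mathlib

open Real

/-- The Lobachevsky function `Λ(θ) = −∫₀^θ log|2 sin t| dt`. -/
noncomputable def lobachevsky (θ : ℝ) : ℝ :=
  -∫ t in (0:ℝ)..θ, Real.log |2 * Real.sin t|

namespace LobachevskyAux

open MeasureTheory intervalIntegral Set

/-- The integrand of the Lobachevsky function. -/
noncomputable def f (t : ℝ) : ℝ := Real.log |2 * Real.sin t|

lemma f_meas : Measurable f := by
  exact Real.measurable_log.comp ((Real.measurable_sin.const_mul 2).abs)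

lemma abs_log_le {t : ℝ} (ht : 0 < t) :
    |Real.log t| ≤ 2 * t ^ ((1:ℝ)/2) + 2 * t ^ (-((1:ℝ)/2)) := by
  have h1 : (0:ℝ) < t ^ ((1:ℝ)/2) := Real.rpow_pos_of_pos ht _
  have h2 : (0:ℝ) < t ^ (-((1:ℝ)/2)) := Real.rpow_pos_of_pos ht _
  have l1 : Real.log (t ^ ((1:ℝ)/2)) ≤ t ^ ((1:ℝ)/2) - 1 :=
    Real.log_le_sub_one_of_pos h1
  have l2 : Real.log (t ^ (-((1:ℝ)/2))) ≤ t ^ (-((1:ℝ)/2)) - 1 :=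
    Real.log_le_sub_one_of_pos h2
  rw [Real.log_rpow ht] at l1 l2
  rw [abs_le]
  constructor <;> nlinarith

lemma int_half : IntervalIntegrable f volume 0 (π/2) := by
  have hpi : (0:ℝ) ≤ π/2 := by positivity
  rw [intervalIntegrable_iff_integrableOn_Ioc_of_le hpi]
  have hg : IntegrableOn
      (fun t : ℝ => 1 + (2 * t ^ ((1:ℝ)/2) + 2 * t ^ (-((1:ℝ)/2))))
      (Set.Ioc 0 (π/2)) volume := by
    have h : IntervalIntegrable
        (fun t : ℝ => 1 + (2 * t ^ ((1:ℝ)/2) + 2 * t ^ (-((1:ℝ)/2)))) volume 0 (π/2) :=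
      intervalIntegrable_const.add
        (((intervalIntegrable_rpow' (by norm_num)).const_mul 2).add
          ((intervalIntegrable_rpow' (by norm_num)).const_mul 2))
    rwa [intervalIntegrable_iff_integrableOn_Ioc_of_le hpi] at h
  refine MeasureTheory.Integrable.mono hg f_meas.aestronglyMeasurable ?_
  filter_upwards [ae_restrict_mem measurableSet_Ioc] with t ht
  obtain ⟨ht0, ht2⟩ := ht
  have hsin0 : 0 ≤ Real.sin t := Real.sin_nonneg_of_nonneg_of_le_pi ht0.le
    (by linarith [Real.pi_pos])
  have hms := Real.mul_le_sin ht0.le ht2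
  have h2t : 2 * t ≤ π * Real.sin t := by
    rw [div_mul_eq_mul_div, div_le_iff₀ Real.pi_pos] at hms
    linarith
  have hsin : t ≤ 2 * Real.sin t := by
    nlinarith [Real.pi_lt_d2]
  have hpos : 0 < 2 * Real.sin t := lt_of_lt_of_le ht0 hsin
  have habs : |2 * Real.sin t| = 2 * Real.sin t := abs_of_pos hpos
  have hup : Real.log (2 * Real.sin t) ≤ 1 := by
    have h1 := Real.log_le_sub_one_of_pos hpos
    nlinarith [Real.sin_le_one t]
  have hlow : Real.log t ≤ Real.log (2 * Real.sin t) :=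
    (Real.log_le_log_iff ht0 hpos).mpr hsin
  have key : |f t| ≤ |Real.log t| + 1 := by
    simp only [f, habs]
    rw [abs_le]
    constructor
    · nlinarith [neg_abs_le (Real.log t)]
    · nlinarith [abs_nonneg (Real.log t)]
  have hbl := abs_log_le ht0
  have hg0 : (0:ℝ) ≤ 1 + (2 * t ^ ((1:ℝ)/2) + 2 * t ^ (-((1:ℝ)/2))) := by positivity
  rw [Real.norm_eq_abs, Real.norm_eq_abs, abs_of_nonneg hg0]
  linarith

lemma int_pi : IntervalIntegrable f volume 0 π := by
  have h1 := int_half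
  have h2 : IntervalIntegrable (fun x => f (-x)) volume 0 (-(π/2)) := by
    simpa using (IntervalIntegrable.iff_comp_neg (by simp)).mp h1
  have h3 := h2.comp_add_right (-π)
  have he : (fun x : ℝ => f (-(x + -π))) = f := by
    funext x
    have hx : -(x + -π) = π - x := by ring
    simp only [hx, f, Real.sin_pi_sub]
  rw [he] at h3
  have e1 : (0:ℝ) - -π = π := by ring
  have e2 : -(π/2) - -π = π/2 := by ring
  rw [e1, e2] at h3
  exact h1.trans h3.symm

lemma int_on {a b : ℝ} (h0a : 0 ≤ a) (hab : a ≤ b) (hbπ : b ≤ π) :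
    IntervalIntegrable f volume a b := by
  apply int_pi.mono_set
  rw [Set.uIcc_of_le hab, Set.uIcc_of_le Real.pi_pos.le]
  exact Set.Icc_subset_Icc h0a hbπ

lemma A_reflect (θ : ℝ) :
    (∫ t in (π - θ)..π, f t) = ∫ t in (0:ℝ)..θ, f t := by
  have h : (∫ t in (0:ℝ)..θ, f t) = ∫ t in (0:ℝ)..θ, f (π - t) := by
    apply intervalIntegral.integral_congr
    intro x _
    simp only [f, Real.sin_pi_sub]
  rw [h, intervalIntegral.integral_comp_sub_left f π, sub_zero]

lemma sin_prod (x : ℝ) :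
    2 * Real.sin (3*x)
      = (2*Real.sin x) * ((2*Real.sin (x+π/3)) * (2*Real.sin (x+2*π/3))) := by
  have h3 := Real.sin_three_mul x
  have e1 : Real.sin (x + π/3)
      = Real.sin x * (1/2) + Real.cos x * (Real.sqrt 3 / 2) := by
    rw [Real.sin_add, Real.cos_pi_div_three, Real.sin_pi_div_three]
  have e2 : Real.sin (x + 2*π/3)
      = Real.sqrt 3 / 2 * Real.cos x - 1/2 * Real.sin x := by
    rw [show x + 2*π/3 = π - (π/3 - x) by ring, Real.sin_pi_sub, Real.sin_sub,
      Real.cos_pi_div_three, Real.sin_pi_div_three]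
  have pyth : Real.sin x ^ 2 + Real.cos x ^ 2 = 1 := Real.sin_sq_add_cos_sq x
  have hsq : Real.sqrt 3 ^ 2 = 3 := Real.sq_sqrt (by norm_num)
  rw [h3, e1, e2]
  linear_combination (-6*Real.sin x) * pyth + (-2*Real.sin x * Real.cos x^2) * hsq

lemma trip : (∫ t in (0:ℝ)..(π/4), f t) =
    3 * ((∫ t in (0:ℝ)..(π/12), f t) + ((∫ t in (π/3)..(5*π/12), f t)
        + (∫ t in (2*π/3)..(3*π/4), f t))) := by
  have hπ := Real.pi_pos
  -- change of variables
  have hc : (∫ t in (0:ℝ)..(π/12), f (3 * t))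
      = (3:ℝ)⁻¹ • ∫ t in (3*(0:ℝ))..(3*(π/12)), f t :=
    intervalIntegral.integral_comp_mul_left f (by norm_num)
  have e0 : 3*(0:ℝ) = 0 := by ring
  have e4 : 3*(π/12) = π/4 := by ring
  rw [e0, e4, smul_eq_mul] at hc
  -- pointwise splitting on the interval
  have hsplit : (∫ t in (0:ℝ)..(π/12), f (3 * t))
      = ∫ t in (0:ℝ)..(π/12), (f t + (f (t + π/3) + f (t + 2*π/3))) := by
    apply intervalIntegral.integral_congr_ae
    filter_upwards with x hx
    rw [Set.uIoc_of_le (by positivity : (0:ℝ) ≤ π/12)] at hx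
    obtain ⟨hx0, hx1⟩ := hx
    have s1 : 0 < Real.sin x :=
      Real.sin_pos_of_pos_of_lt_pi hx0 (by linarith)
    have s2 : 0 < Real.sin (x + π/3) :=
      Real.sin_pos_of_pos_of_lt_pi (by linarith) (by linarith)
    have s3 : 0 < Real.sin (x + 2*π/3) :=
      Real.sin_pos_of_pos_of_lt_pi (by linarith) (by linarith)
    have n1 : |2*Real.sin x| ≠ 0 := by positivity
    have n2 : |2*Real.sin (x + π/3)| ≠ 0 := by positivity
    have n3 : |2*Real.sin (x + 2*π/3)| ≠ 0 := by positivity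
    simp only [f]
    rw [sin_prod x,
      abs_mul (2*Real.sin x) ((2*Real.sin (x+π/3)) * (2*Real.sin (x+2*π/3))),
      Real.log_mul n1 (by positivity),
      abs_mul (2*Real.sin (x+π/3)) (2*Real.sin (x+2*π/3)),
      Real.log_mul n2 n3]
  -- integrability of the pieces
  have i1 : IntervalIntegrable f volume 0 (π/12) :=
    int_on le_rfl (by linarith) (by linarith)
  have i2 : IntervalIntegrable (fun t => f (t + π/3)) volume 0 (π/12) := by
    have h := (int_on (a := π/3) (b := 5*π/12) (by positivity) (by linarith)
      (by linarith)).comp_add_right (π/3)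
    have e1 : π/3 - π/3 = (0:ℝ) := by ring
    have e2 : 5*π/12 - π/3 = π/12 := by ring
    rwa [e1, e2] at h
  have i3 : IntervalIntegrable (fun t => f (t + 2*π/3)) volume 0 (π/12) := by
    have h := (int_on (a := 2*π/3) (b := 3*π/4) (by positivity) (by linarith)
      (by linarith)).comp_add_right (2*π/3)
    have e1 : 2*π/3 - 2*π/3 = (0:ℝ) := by ring
    have e2 : 3*π/4 - 2*π/3 = π/12 := by ring
    rwa [e1, e2] at h
  -- shift identities
  have sh2 : (∫ t in (0:ℝ)..(π/12), f (t + π/3)) = ∫ t in (π/3)..(5*π/12), f t := by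
    have h := intervalIntegral.integral_comp_add_right (a := (0:ℝ)) (b := π/12) f (π/3)
    have e1 : (0:ℝ) + π/3 = π/3 := by ring
    have e2 : π/12 + π/3 = 5*π/12 := by ring
    rwa [e1, e2] at h
  have sh3 : (∫ t in (0:ℝ)..(π/12), f (t + 2*π/3)) = ∫ t in (2*π/3)..(3*π/4), f t := by
    have h := intervalIntegral.integral_comp_add_right (a := (0:ℝ)) (b := π/12) f (2*π/3)
    have e1 : (0:ℝ) + 2*π/3 = 2*π/3 := by ring
    have e2 : π/12 + 2*π/3 = 3*π/4 := by ring
    rwa [e1, e2] at h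
  have hadd : (∫ t in (0:ℝ)..(π/12), (f t + (f (t + π/3) + f (t + 2*π/3))))
      = (∫ t in (0:ℝ)..(π/12), f t) + ((∫ t in (0:ℝ)..(π/12), f (t + π/3))
        + (∫ t in (0:ℝ)..(π/12), f (t + 2*π/3))) := by
    rw [intervalIntegral.integral_add i1 (i2.add i3),
      intervalIntegral.integral_add i2 i3]
  have := hc.symm.trans (hsplit.trans hadd)
  rw [sh2, sh3] at this
  linarith

end LobachevskyAux

/-- Thurston's antiprism formula at `n = 3` gives the volume of the regular
ideal octahedron: `6(Λ(5π/12) + Λ(π/12)) = 8Λ(π/4)`. -/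
theorem antiprism_three_eq_octahedron :
    6 * (lobachevsky (5 * π / 12) + lobachevsky (π / 12))
      = 8 * lobachevsky (π / 4) := by
  open LobachevskyAux in
  have hπ := Real.pi_pos
  -- interval integrals as differences of `A`
  have d2a : (∫ t in (π/3)..(5*π/12), f t)
      = (∫ t in (0:ℝ)..(5*π/12), f t) - ∫ t in (0:ℝ)..(π/3), f t :=
    (intervalIntegral.integral_interval_sub_left
      (int_on (a:=0) (b:=5*π/12) le_rfl (by linarith) (by linarith))
      (int_on (a:=0) (b:=π/3) le_rfl (by linarith) (by linarith))).symm
  have d2b : (∫ t in (2*π/3)..(3*π/4), f t)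
      = (∫ t in (0:ℝ)..(3*π/4), f t) - ∫ t in (0:ℝ)..(2*π/3), f t :=
    (intervalIntegral.integral_interval_sub_left
      (int_on (a:=0) (b:=3*π/4) le_rfl (by linarith) (by linarith))
      (int_on (a:=0) (b:=2*π/3) le_rfl (by linarith) (by linarith))).symm
  -- reflection identities
  have r1 : (∫ t in (3*π/4)..π, f t) = ∫ t in (0:ℝ)..(π/4), f t := by
    have h := A_reflect (π/4)
    rwa [show π - π/4 = 3*π/4 by ring] at h
  have r2 : (∫ t in (2*π/3)..π, f t) = ∫ t in (0:ℝ)..(π/3), f t := by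
    have h := A_reflect (π/3)
    rwa [show π - π/3 = 2*π/3 by ring] at h
  have r1' : (∫ t in (3*π/4)..π, f t)
      = (∫ t in (0:ℝ)..π, f t) - ∫ t in (0:ℝ)..(3*π/4), f t :=
    (intervalIntegral.integral_interval_sub_left int_pi
      (int_on (a:=0) (b:=3*π/4) le_rfl (by linarith) (by linarith))).symm
  have r2' : (∫ t in (2*π/3)..π, f t)
      = (∫ t in (0:ℝ)..π, f t) - ∫ t in (0:ℝ)..(2*π/3), f t :=
    (intervalIntegral.integral_interval_sub_left int_pi
      (int_on (a:=0) (b:=2*π/3) le_rfl (by linarith) (by linarith))).symm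
  have htrip := trip
  rw [d2a, d2b] at htrip
  have h5 : lobachevsky (5 * π / 12) = -∫ t in (0:ℝ)..(5*π/12), f t := rfl
  have h1 : lobachevsky (π / 12) = -∫ t in (0:ℝ)..(π/12), f t := rfl
  have h4 : lobachevsky (π / 4) = -∫ t in (0:ℝ)..(π/4), f t := rfl
  rw [h5, h1, h4]
  linarith
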